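/- For each m = 1, …, 4 there exist polynomials K_m, L_m ∈ S such that h_m = x_3·K_m + (a_2x_2 − a_3x_1)·L_m; consequently h_m = x_3·(K_m + a_1L_m) − L_m·P_2. -/

import Mathlib

open MvPolynomial

/-- Variables of the generic Jerry: coefficients `a_i^k`, `b_i^k`, `c^k`
(`1 ≤ i ≤ 3`, `1 ≤ k ≤ 4`) and the variables `x_1, x_2, x_3`, `z_1, …, z_4`. -/
abbrev JerryVars : Type :=
  ((Fin 3 × Fin 4) ⊕ (Fin 3 × Fin 4)) ⊕ (Fin 4 ⊕ (Fin 3 ⊕ Fin 4))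

/-- The polynomial ring `S = ℤ[x_i, z_k, c^k, a_i^k, b_i^k]` in the 35
indeterminates. -/
abbrev JerryS : Type := MvPolynomial JerryVars ℤ

/-- The variable `a_{i+1}^{k+1}`. -/
noncomputable def jAC (i : Fin 3) (k : Fin 4) : JerryS :=
  X (Sum.inl (Sum.inl (i, k)))

/-- The variable `b_{i+1}^{k+1}`. -/
noncomputable def jBC (i : Fin 3) (k : Fin 4) : JerryS :=
  X (Sum.inl (Sum.inr (i, k)))

/-- The variable `c^{k+1}`. -/
noncomputable def jCC (k : Fin 4) : JerryS := X (Sum.inr (Sum.inl k))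

/-- The variable `x_{i+1}`. -/
noncomputable def jX (i : Fin 3) : JerryS := X (Sum.inr (Sum.inr (Sum.inl i)))

/-- The variable `z_{k+1}`. -/
noncomputable def jZ (k : Fin 4) : JerryS := X (Sum.inr (Sum.inr (Sum.inr k)))

/-- The entry `a_i = ∑ k, a_i^k z_k`. -/
noncomputable def jA (i : Fin 3) : JerryS := ∑ k : Fin 4, jAC i k * jZ k

/-- The entry `b_i = ∑ k, b_i^k z_k`. -/
noncomputable def jB (i : Fin 3) : JerryS := ∑ k : Fin 4, jBC i k * jZ k

/-- The entry `c = ∑ k, c^k z_k`. -/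
noncomputable def jC : JerryS := ∑ k : Fin 4, jCC k * jZ k

/-- The Pfaffians `P_1, …, P_5` of the generic Jerry matrix. -/
noncomputable def jerryP (i : Fin 5) : JerryS :=
  ![jB 0 * jX 2 - jB 1 * jX 1 + jB 2 * jX 0,
    jA 0 * jX 2 - jA 1 * jX 1 + jA 2 * jX 0,
    jC * jX 2 - jA 1 * jB 2 + jA 2 * jB 1,
    jC * jX 1 - jA 0 * jB 2 + jA 2 * jB 0,
    jC * jX 0 - jA 0 * jB 1 + jA 1 * jB 0] i

/-- The generic integral Jerry ideal `I = (P_1, …, P_5)`. -/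
noncomputable def jerryIdeal : Ideal JerryS := Ideal.span (Set.range jerryP)

/-- The `3 × 4` matrix `Q` with `Q_{1k} = b₁ᵏx₃ − b₂ᵏx₂ + b₃ᵏx₁`,
`Q_{2k} = a₁ᵏx₃ − a₂ᵏx₂ + a₃ᵏx₁`, `Q_{3k} = cᵏx₃ − a₂b₃ᵏ + a₃b₂ᵏ`. -/
noncomputable def jerryQ : Matrix (Fin 3) (Fin 4) JerryS :=
  Matrix.of
    ![fun k => jBC 0 k * jX 2 - jBC 1 k * jX 1 + jBC 2 k * jX 0,
      fun k => jAC 0 k * jX 2 - jAC 1 k * jX 1 + jAC 2 k * jX 0,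
      fun k => jCC k * jX 2 - jA 1 * jBC 2 k + jA 2 * jBC 1 k]

/-- `h_m`: `(-1)^(m+1)` times the determinant of the `3 × 3` submatrix of `Q`
obtained by deleting the `m`-th column (0-indexed, the sign is
`(-1)^(m : ℕ)`). -/
noncomputable def jerryH (m : Fin 4) : JerryS :=
  (-1 : JerryS) ^ (m : ℕ) * (jerryQ.submatrix id m.succAbove).det

/-- Signed determinant of the `3×3` submatrix (deleting column `m`) of the
matrix with rows `u, v, w`. -/
noncomputable def jD3 (u v w : Fin 4 → JerryS) (m : Fin 4) : JerryS :=
  ((Matrix.of ![u, v, w]).submatrix id m.succAbove).det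

/-- The second row of `Q`. -/
noncomputable def jQ2 (k : Fin 4) : JerryS :=
  jAC 0 k * jX 2 - jAC 1 k * jX 1 + jAC 2 k * jX 0

/-- The first row of `Q`. -/
noncomputable def jQ1 (k : Fin 4) : JerryS :=
  jBC 0 k * jX 2 - jBC 1 k * jX 1 + jBC 2 k * jX 0

/-- The witness `K_m`. -/
noncomputable def jK (m : Fin 4) : JerryS :=
  (-1 : JerryS) ^ (m : ℕ) *
    (jD3 jQ1 jQ2 jCC m - jA 1 * jD3 (jBC 0) jQ2 (jBC 2) m
      + jA 2 * jD3 (jBC 0) jQ2 (jBC 1) m)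

/-- The witness `L_m`. -/
noncomputable def jL (m : Fin 4) : JerryS :=
  (-1 : JerryS) ^ (m : ℕ) * jD3 (jBC 1) jQ2 (jBC 2) m

/-- For each `m = 1, …, 4` there exist polynomials
`K_m, L_m ∈ S` with `h_m = x₃·K_m + (a₂x₂ − a₃x₁)·L_m`; consequently
`h_m = x₃·(K_m + a₁L_m) − L_m·P_2`. -/
theorem stmt_11 :
    ∀ m : Fin 4, ∃ K L : JerryS,
      jerryH m = jX 2 * K + (jA 1 * jX 1 - jA 2 * jX 0) * L ∧
      jerryH m = jX 2 * (K + jA 0 * L) - L * jerryP 1 := by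
  intro m
  have h1 : jerryH m = jX 2 * jK m + (jA 1 * jX 1 - jA 2 * jX 0) * jL m := by
    fin_cases m <;>
    · simp only [jerryH, jK, jL, jD3, jQ1, jQ2, jerryQ, jA, Fin.sum_univ_four,
        Matrix.det_fin_three, Matrix.submatrix_apply, Matrix.of_apply, id_eq,
        Fin.isValue, Fin.succAbove, Fin.castSucc, Fin.castAdd, Fin.castLE,
        Matrix.cons_val', Matrix.cons_val_zero, Matrix.cons_val_one,
        Matrix.head_cons, Matrix.head_fin_const, Matrix.empty_val',
        Matrix.cons_val_fin_one, Matrix.cons_val_two, Matrix.tail_cons, Fin.reduceSucc]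
      norm_num
      ring
  refine ⟨jK m, jL m, h1, ?_⟩
  rw [h1]
  show _ = jX 2 * (jK m + jA 0 * jL m) - jL m *
    (jA 0 * jX 2 - jA 1 * jX 1 + jA 2 * jX 0)
  ring
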